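/- Completeness of polarized subtyping for call-by-value: for call-by-value type names t, u and their Levy translations [t]_V, [u]_V into positive CBPV type names, (1) if t empty (CBV emptiness) then [t]_V empty (CBPV emptiness), and (2) if t ≤ u (CBV subtyping) then [t]_V ≤ [u]_V (CBPV positive subtyping). -/

import Mathlib

namespace CBPV

abbrev Label := String
abbrev Var := String

-- Positive types (values); `name` refers to an equirecursively defined type name.
mutual
inductive PosTp : Type where
  | name : String → PosTp
  | str  : PosStr → PosTp

/-- Structural positive types. -/
inductive PosStr : Type where
  | tensor : PosTp → PosTp → PosStr
  | one    : PosStr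
  | plus   : List (Label × PosTp) → PosStr
  | down   : NegTp → PosStr

/-- Negative types (computations). -/
inductive NegTp : Type where
  | name : String → NegTp
  | str  : NegStr → NegTp

/-- Structural negative types. -/
inductive NegStr : Type where
  | arrow   : PosTp → NegTp → NegStr
  | withRec : List (Label × NegTp) → NegStr
  | up      : PosTp → NegStr
end

mutual
/-- Values. -/
inductive Val : Type where
  | var   : Var → Val
  | pair  : Val → Val → Val
  | unit  : Val
  | inj   : Label → Val → Val
  | thunk : Comp → Val

/-- Computations. -/
inductive Comp : Type where
  | lam       : Var → Comp → Comp
  | app       : Comp → Val → Comp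
  | record    : List (Label × Comp) → Comp
  | proj      : Comp → Label → Comp
  | ret       : Val → Comp
  | letret    : Var → Comp → Comp → Comp
  | name      : String → Comp
  | matchPair : Val → Var → Var → Comp → Comp
  | matchUnit : Val → Comp → Comp
  | matchSum  : Val → List (Label × Var × Comp) → Comp
  | force     : Val → Comp
end

/-- A global signature: equirecursive (contractive) type definitions `t = τ⁺`,
`s = σ⁻`, and recursive expression definitions `f : σ⁻ = e`. -/
structure Signature : Type where
  pos  : String → PosStr
  neg  : String → NegStr
  defs : String → NegTp × Comp

mutual
/-- Substitution of value `w` for variable `x` in a value. -/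
def substV (w : Val) (x : Var) : Val → Val
  | .var y => if y = x then w else .var y
  | .pair v₁ v₂ => .pair (substV w x v₁) (substV w x v₂)
  | .unit => .unit
  | .inj j v => .inj j (substV w x v)
  | .thunk e => .thunk (substC w x e)

/-- Substitution of value `w` for variable `x` in a computation. -/
def substC (w : Val) (x : Var) : Comp → Comp
  | .lam y e => .lam y (if y = x then e else substC w x e)
  | .app e v => .app (substC w x e) (substV w x v)
  | .record L => .record (substRec w x L)
  | .proj e j => .proj (substC w x e) j
  | .ret v => .ret (substV w x v)
  | .letret y e₁ e₂ => .letret y (substC w x e₁) (if y = x then e₂ else substC w x e₂)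
  | .name f => .name f
  | .matchPair v y z e =>
      .matchPair (substV w x v) y z (if y = x ∨ z = x then e else substC w x e)
  | .matchUnit v e => .matchUnit (substV w x v) (substC w x e)
  | .matchSum v B => .matchSum (substV w x v) (substBr w x B)
  | .force v => .force (substV w x v)

def substRec (w : Val) (x : Var) : List (Label × Comp) → List (Label × Comp)
  | [] => []
  | (l, e) :: rest => (l, substC w x e) :: substRec w x rest

def substBr (w : Val) (x : Var) : List (Label × Var × Comp) → List (Label × Var × Comp)
  | [] => []
  | (l, y, e) :: rest =>
      (l, y, if y = x then e else substC w x e) :: substBr w x rest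
end

/-- Terminal computations. -/
inductive Terminal : Comp → Prop where
  | lam    : Terminal (.lam x e)
  | record : Terminal (.record L)
  | ret    : Terminal (.ret v)

/-- Small-step dynamics of call-by-push-value, relative to a signature. -/
inductive Step (Sg : Signature) : Comp → Comp → Prop where
  | beta       : Step Sg (.app (.lam x e) v) (substC v x e)
  | app        : Step Sg e e' → Step Sg (.app e v) (.app e' v)
  | letretBeta : Step Sg (.letret x (.ret v) e₂) (substC v x e₂)
  | letretStep : Step Sg e₁ e₁' → Step Sg (.letret x e₁ e₂) (.letret x e₁' e₂)
  | projBeta   : L.lookup j = some e → Step Sg (.proj (.record L) j) e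
  | projStep   : Step Sg e e' → Step Sg (.proj e j) (.proj e' j)
  | matchPair  : Step Sg (.matchPair (.pair v₁ v₂) x y e) (substC v₁ x (substC v₂ y e))
  | matchUnit  : Step Sg (.matchUnit .unit e) e
  | matchSum   : B.lookup j = some (x, ej) → Step Sg (.matchSum (.inj j v) B) (substC v x ej)
  | force      : Step Sg (.force (.thunk e)) e
  | name       : Sg.defs f = (σ, e) → Step Sg (.name f) e

end CBPV

namespace CBPV

def PosTp.IsName : PosTp → Prop := fun τ => ∃ t, τ = .name t
def NegTp.IsName : NegTp → Prop := fun σ => ∃ s, σ = .name s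

/-- A structural positive type is in normal form if all of its components are
type names, and its label lists have no duplicate labels. -/
def PosStrNormal : PosStr → Prop
  | .tensor τ₁ τ₂ => τ₁.IsName ∧ τ₂.IsName
  | .one => True
  | .plus L => (∀ p ∈ L, (Prod.snd p).IsName) ∧ (L.map Prod.fst).Nodup
  | .down σ => σ.IsName

def NegStrNormal : NegStr → Prop
  | .arrow τ σ => τ.IsName ∧ σ.IsName
  | .withRec L => (∀ p ∈ L, (Prod.snd p).IsName) ∧ (L.map Prod.fst).Nodup
  | .up τ => τ.IsName

/-- A signature is in normal form when every type definition alternates between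
type names and structural types, i.e. the components of every defined
structural type are themselves type names. -/
def SigNormal (Sg : Signature) : Prop :=
  (∀ t, PosStrNormal (Sg.pos t)) ∧ (∀ s, NegStrNormal (Sg.neg s))

/-- One unfolding of the rules for the emptiness judgment `t empty`. -/
def EmptyUnf (Sg : Signature) (S : String → Prop) (t : String) : Prop :=
  (∃ L, Sg.pos t = .plus L ∧
     ∀ p ∈ L, ∃ tj, Prod.snd p = PosTp.name tj ∧ S tj) ∨
  (∃ t₁ t₂, Sg.pos t = .tensor (.name t₁) (.name t₂) ∧ (S t₁ ∨ S t₂))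

/-- `t empty`: the greatest fixed point (circular derivations) of the
emptiness rules. -/
def TpEmpty (Sg : Signature) (t : String) : Prop :=
  ∃ S : String → Prop, (∀ u, S u → EmptyUnf Sg S u) ∧ S t

/-- `s full`: `s = t₁ → s₂ ∈ Σ` with `t₁ empty`, or `s = &{} ∈ Σ`. -/
def TpFull (Sg : Signature) (s : String) : Prop :=
  (∃ t₁ s₂, Sg.neg s = .arrow (.name t₁) (.name s₂) ∧ TpEmpty Sg t₁) ∨
  Sg.neg s = .withRec []

/-- One unfolding of the rules for positive subtyping `t ≤ u` between
positive type names. -/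
def PosSubUnf (Sg : Signature) (P N : String → String → Prop) (t u : String) : Prop :=
  (∃ t₁ t₂ u₁ u₂, Sg.pos t = .tensor (.name t₁) (.name t₂) ∧
     Sg.pos u = .tensor (.name u₁) (.name u₂) ∧ P t₁ u₁ ∧ P t₂ u₂) ∨
  (Sg.pos t = .one ∧ Sg.pos u = .one) ∨
  (∃ L K, Sg.pos t = .plus L ∧ Sg.pos u = .plus K ∧
     ∀ p ∈ L, ∃ tj, Prod.snd p = PosTp.name tj ∧
       (TpEmpty Sg tj ∨ ∃ uj, K.lookup (Prod.fst p) = some (PosTp.name uj) ∧ P tj uj)) ∨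
  (∃ s r, Sg.pos t = .down (.name s) ∧ Sg.pos u = .down (.name r) ∧ N s r) ∨
  TpEmpty Sg t

/-- One unfolding of the rules for negative subtyping `s ≤ r` between
negative type names. -/
def NegSubUnf (Sg : Signature) (P N : String → String → Prop) (s r : String) : Prop :=
  (∃ t₁ s₂ u₁ r₂, Sg.neg s = .arrow (.name t₁) (.name s₂) ∧
     Sg.neg r = .arrow (.name u₁) (.name r₂) ∧ P u₁ t₁ ∧ N s₂ r₂) ∨
  (∃ t u, Sg.neg s = .up (.name t) ∧ Sg.neg r = .up (.name u) ∧ P t u) ∨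
  (∃ L K, Sg.neg s = .withRec L ∧ Sg.neg r = .withRec K ∧
     ∀ p ∈ K, ∃ rj, Prod.snd p = NegTp.name rj ∧
       ∃ sj, L.lookup (Prod.fst p) = some (NegTp.name sj) ∧ N sj rj) ∨
  (∃ t, Sg.neg s = .up (.name t) ∧ TpEmpty Sg t) ∨
  TpFull Sg r

/-- `t ≤ u`: syntactic subtyping between positive type names, interpreted as
circular derivations (greatest fixed point of the subtyping rules). -/
def PosSub (Sg : Signature) (t u : String) : Prop :=
  ∃ P N : String → String → Prop,
    (∀ a b, P a b → PosSubUnf Sg P N a b) ∧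
    (∀ a b, N a b → NegSubUnf Sg P N a b) ∧ P t u

/-- `s ≤ r`: syntactic subtyping between negative type names, interpreted as
circular derivations (greatest fixed point of the subtyping rules). -/
def NegSub (Sg : Signature) (s r : String) : Prop :=
  ∃ P N : String → String → Prop,
    (∀ a b, P a b → PosSubUnf Sg P N a b) ∧
    (∀ a b, N a b → NegSubUnf Sg P N a b) ∧ N s r

end CBPV

namespace CBPV

/-- Structural source-language types (for call-by-name and call-by-value),
with type-name components: functions, eager pairs, unit, variant records and
lazy records. -/
inductive SrcTp : Type where
  | arrow   : String → String → SrcTp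
  | tensor  : String → String → SrcTp
  | one     : SrcTp
  | plus    : List (Label × String) → SrcTp
  | withRec : List (Label × String) → SrcTp

/-- A source-language signature of equirecursive type-name definitions. -/
structure SrcSig : Type where
  def_ : String → SrcTp

end CBPV

namespace CBPV

/-- One unfolding of the rules for call-by-value emptiness `t empty`. -/
def CBVEmptyUnf (S : SrcSig) (E : String → Prop) (t : String) : Prop :=
  (∃ t₁ t₂, S.def_ t = .tensor t₁ t₂ ∧ (E t₁ ∨ E t₂)) ∨
  (∃ L, S.def_ t = .plus L ∧ ∀ p ∈ L, E (Prod.snd p))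

/-- Call-by-value emptiness `t empty` (greatest fixed point of the rules). -/
def CBVEmpty (S : SrcSig) (t : String) : Prop :=
  ∃ E : String → Prop, (∀ a, E a → CBVEmptyUnf S E a) ∧ E t

/-- One unfolding of the rules for call-by-value subtyping `t ≤ u`. -/
def CBVUnf (S : SrcSig) (R : String → String → Prop) (t u : String) : Prop :=
  (∃ t₁ t₂ u₁ u₂, S.def_ t = .arrow t₁ t₂ ∧ S.def_ u = .arrow u₁ u₂ ∧
     R u₁ t₁ ∧ R t₂ u₂) ∨
  (∃ t₁ t₂ u₁ u₂, S.def_ t = .tensor t₁ t₂ ∧ S.def_ u = .tensor u₁ u₂ ∧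
     R t₁ u₁ ∧ R t₂ u₂) ∨
  (S.def_ t = .one ∧ S.def_ u = .one) ∨
  (∃ L J, S.def_ t = .plus L ∧ S.def_ u = .plus J ∧
     ∀ p ∈ L, (J.lookup (Prod.fst p) = none ∧ CBVEmpty S (Prod.snd p)) ∨
       (∃ uℓ, J.lookup (Prod.fst p) = some uℓ ∧ R (Prod.snd p) uℓ)) ∨
  (∃ L J, S.def_ t = .withRec L ∧ S.def_ u = .withRec J ∧
     ∀ p ∈ J, ∃ tj, L.lookup (Prod.fst p) = some tj ∧ R tj (Prod.snd p)) ∨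
  CBVEmpty S t ∨
  (∃ t₁ t₂ u₁ u₂, S.def_ t = .arrow t₁ t₂ ∧ S.def_ u = .arrow u₁ u₂ ∧
     CBVEmpty S u₁) ∨
  (∃ L u₁ u₂, S.def_ t = .withRec L ∧ S.def_ u = .arrow u₁ u₂ ∧
     CBVEmpty S u₁) ∨
  (∃ t₁ t₂, S.def_ t = .arrow t₁ t₂ ∧ S.def_ u = .withRec [])

/-- Call-by-value subtyping `t ≤ u`, interpreted as circular derivations
(greatest fixed point of the call-by-value subtyping rules). -/
def CBVSub (S : SrcSig) (t u : String) : Prop :=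
  ∃ R : String → String → Prop, (∀ a b, R a b → CBVUnf S R a b) ∧ R t u

/-- Levy's call-by-value translation of types, specified relationally:
`tr t` is the CBPV positive type name `[t]_V`, and the translated signature is
in normal form, with auxiliary type names inserted as needed:
`[τ→σ]_V = ↓([τ]_V → ↑[σ]_V)`, `[τ₁⊗τ₂]_V = [τ₁]_V ⊗ [τ₂]_V`, `[1]_V = 1`,
`[⊕{ℓ:τ_ℓ}]_V = ⊕{ℓ:[τ_ℓ]_V}`, and `[&{ℓ:σ_ℓ}]_V = ↓&{ℓ:↑[σ_ℓ]_V}`. -/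
def CBVTrans (S : SrcSig) (Sg : Signature) (tr : String → String) : Prop :=
  ∀ t : String,
    match S.def_ t with
    | .arrow t₁ t₂ => ∃ n m,
        Sg.pos (tr t) = .down (.name n) ∧
        Sg.neg n = .arrow (.name (tr t₁)) (.name m) ∧
        Sg.neg m = .up (.name (tr t₂))
    | .tensor t₁ t₂ =>
        Sg.pos (tr t) = .tensor (.name (tr t₁)) (.name (tr t₂))
    | .one => Sg.pos (tr t) = .one
    | .plus L =>
        Sg.pos (tr t) = .plus (L.map (fun p => (p.1, PosTp.name (tr p.2))))
    | .withRec L => ∃ (n : String) (M : Label × String → String),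
        Sg.pos (tr t) = .down (.name n) ∧
        Sg.neg n = .withRec (L.map (fun p => (p.1, NegTp.name (M p)))) ∧
        ∀ p ∈ L, Sg.neg (M p) = .up (.name (tr (Prod.snd p)))

end CBPV

namespace CBPV

private lemma lookup_map_pair {α β : Type} (f : Label × α → β) :
    ∀ (L : List (Label × α)) (k : Label),
      (L.map (fun p => (p.1, f p))).lookup k = Option.map (fun v => f (k, v)) (L.lookup k)
  | [], _ => rfl
  | (a, b) :: rest, k => by
      by_cases h : k = a
      · subst h; simp [List.lookup]
      · have hb : (k == a) = false := beq_false_of_ne h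
        simp only [List.map, List.lookup, hb]
        exact lookup_map_pair f rest k

private lemma mem_of_lookup' {α : Type} :
    ∀ {L : List (Label × α)} {k : Label} {v : α}, L.lookup k = some v → (k, v) ∈ L
  | (a, b) :: rest, k, v, h => by
      by_cases hk : k = a
      · subst hk
        simp [List.lookup] at h
        subst h; exact List.mem_cons_self
      · have hb : (k == a) = false := beq_false_of_ne hk
        simp only [List.lookup, hb] at h
        exact List.mem_cons_of_mem _ (mem_of_lookup' h)

private lemma empty_complete (S : SrcSig) (Sg : Signature) (tr : String → String)
    (htr : CBVTrans S Sg tr) {t : String} (h : CBVEmpty S t) : TpEmpty Sg (tr t) := by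
  obtain ⟨E, hE, hEt⟩ := h
  refine ⟨fun x => ∃ a, E a ∧ x = tr a, ?_, ⟨t, hEt, rfl⟩⟩
  rintro u ⟨a, hEa, rfl⟩
  rcases hE a hEa with ⟨t₁, t₂, hdef, hor⟩ | ⟨L, hdef, hall⟩
  · have ha := htr a
    simp only [hdef] at ha
    exact Or.inr ⟨tr t₁, tr t₂, ha,
      hor.imp (fun h => ⟨t₁, h, rfl⟩) (fun h => ⟨t₂, h, rfl⟩)⟩
  · have ha := htr a
    simp only [hdef] at ha
    refine Or.inl ⟨_, ha, ?_⟩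
    rintro p hp
    simp only [List.mem_map] at hp
    obtain ⟨q, hq, rfl⟩ := hp
    exact ⟨tr q.2, rfl, q.2, hall q hq, rfl⟩

/-- Completeness of polarized subtyping for call-by-value: for call-by-value
type names `t`, `u` and their Levy translations `[t]_V`, `[u]_V` into positive
CBPV type names,
(1) if `t empty` (CBV emptiness) then `[t]_V empty` (CBPV emptiness), and
(2) if `t ≤ u` (CBV subtyping) then `[t]_V ≤ [u]_V` (CBPV positive subtyping). -/
theorem cbv_subtyping_complete (S : SrcSig) (Sg : Signature)
    (tr : String → String) (htr : CBVTrans S Sg tr) :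
    (∀ t : String, CBVEmpty S t → TpEmpty Sg (tr t)) ∧
    (∀ t u : String, CBVSub S t u → PosSub Sg (tr t) (tr u)) := by
  refine ⟨fun t h => empty_complete S Sg tr htr h, ?_⟩
  intro t u hsub
  obtain ⟨R, hR, hRtu⟩ := hsub
  -- the positive simulation
  set P : String → String → Prop :=
    fun x y => ∃ a b, R a b ∧ x = tr a ∧ y = tr b with hP
  -- the "up" part of the negative simulation
  set NB : String → String → Prop :=
    fun x y => ∃ a b, R a b ∧ Sg.neg x = .up (.name (tr a)) ∧
      Sg.neg y = .up (.name (tr b)) with hNB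
  set N : String → String → Prop := fun x y =>
    (∃ t₁ u₁ m₁ m₂, Sg.neg x = .arrow (.name (tr t₁)) (.name m₁) ∧
       Sg.neg y = .arrow (.name (tr u₁)) (.name m₂) ∧ R u₁ t₁ ∧ NB m₁ m₂) ∨
    NB x y ∨
    (∃ L K, Sg.neg x = .withRec L ∧ Sg.neg y = .withRec K ∧
       ∀ p ∈ K, ∃ rj, p.2 = NegTp.name rj ∧
         ∃ sj, L.lookup p.1 = some (NegTp.name sj) ∧ NB sj rj) ∨
    TpFull Sg y with hN
  refine ⟨P, N, ?_, ?_, ⟨t, u, hRtu, rfl, rfl⟩⟩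
  · -- P closed under unfolding
    rintro x y ⟨a, b, hab, rfl, rfl⟩
    rcases hR a b hab with
      ⟨t₁, t₂, u₁, u₂, hda, hdb, h1, h2⟩ |
      ⟨t₁, t₂, u₁, u₂, hda, hdb, h1, h2⟩ |
      ⟨hda, hdb⟩ |
      ⟨L, J, hda, hdb, hall⟩ |
      ⟨L, J, hda, hdb, hall⟩ |
      hemp |
      ⟨t₁, t₂, u₁, u₂, hda, hdb, hemp⟩ |
      ⟨L, u₁, u₂, hda, hdb, hemp⟩ |
      ⟨t₁, t₂, hda, hdb⟩
    · -- arrow / arrow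
      have ha := htr a; simp only [hda] at ha
      have hb := htr b; simp only [hdb] at hb
      obtain ⟨na, ma, hpa, hna, hma⟩ := ha
      obtain ⟨nb, mb, hpb, hnb, hmb⟩ := hb
      refine Or.inr (Or.inr (Or.inr (Or.inl ⟨na, nb, hpa, hpb, ?_⟩)))
      exact Or.inl ⟨t₁, u₁, ma, mb, hna, hnb, h1, ⟨t₂, u₂, h2, hma, hmb⟩⟩
    · -- tensor / tensor
      have ha := htr a; simp only [hda] at ha
      have hb := htr b; simp only [hdb] at hb
      exact Or.inl ⟨tr t₁, tr t₂, tr u₁, tr u₂, ha, hb,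
        ⟨t₁, u₁, h1, rfl, rfl⟩, ⟨t₂, u₂, h2, rfl, rfl⟩⟩
    · -- one / one
      have ha := htr a; simp only [hda] at ha
      have hb := htr b; simp only [hdb] at hb
      exact Or.inr (Or.inl ⟨ha, hb⟩)
    · -- plus / plus
      have ha := htr a; simp only [hda] at ha
      have hb := htr b; simp only [hdb] at hb
      refine Or.inr (Or.inr (Or.inl ⟨_, _, ha, hb, ?_⟩))
      rintro p hp
      simp only [List.mem_map] at hp
      obtain ⟨q, hq, rfl⟩ := hp
      refine ⟨tr q.2, rfl, ?_⟩
      rcases hall q hq with ⟨_, hemp⟩ | ⟨uℓ, hlk, hr⟩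
      · exact Or.inl (empty_complete S Sg tr htr hemp)
      · refine Or.inr ⟨tr uℓ, ?_, q.2, uℓ, hr, rfl, rfl⟩
        rw [lookup_map_pair (fun p => PosTp.name (tr p.2)) J q.1, hlk]
        rfl
    · -- withRec / withRec
      have ha := htr a; simp only [hda] at ha
      have hb := htr b; simp only [hdb] at hb
      obtain ⟨na, Ma, hpa, hna, hMa⟩ := ha
      obtain ⟨nb, Mb, hpb, hnb, hMb⟩ := hb
      refine Or.inr (Or.inr (Or.inr (Or.inl ⟨na, nb, hpa, hpb, ?_⟩)))
      refine Or.inr (Or.inr (Or.inl ⟨_, _, hna, hnb, ?_⟩))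
      rintro p hp
      simp only [List.mem_map] at hp
      obtain ⟨q, hq, rfl⟩ := hp
      obtain ⟨tj, hlk, hr⟩ := hall q hq
      refine ⟨Mb q, rfl, Ma (q.1, tj), ?_, ?_⟩
      · rw [lookup_map_pair (fun p => NegTp.name (Ma p)) L q.1, hlk]
        rfl
      · exact ⟨tj, q.2, hr, hMa (q.1, tj) (mem_of_lookup' hlk), hMb q hq⟩
    · -- empty
      exact Or.inr (Or.inr (Or.inr (Or.inr (empty_complete S Sg tr htr hemp))))
    · -- arrow / arrow with empty domain
      have ha := htr a; simp only [hda] at ha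
      have hb := htr b; simp only [hdb] at hb
      obtain ⟨na, ma, hpa, hna, hma⟩ := ha
      obtain ⟨nb, mb, hpb, hnb, hmb⟩ := hb
      refine Or.inr (Or.inr (Or.inr (Or.inl ⟨na, nb, hpa, hpb, ?_⟩)))
      exact Or.inr (Or.inr (Or.inr (Or.inl ⟨tr u₁, mb, hnb,
        empty_complete S Sg tr htr hemp⟩)))
    · -- withRec / arrow with empty domain
      have ha := htr a; simp only [hda] at ha
      have hb := htr b; simp only [hdb] at hb
      obtain ⟨na, Ma, hpa, hna, hMa⟩ := ha
      obtain ⟨nb, mb, hpb, hnb, hmb⟩ := hb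
      refine Or.inr (Or.inr (Or.inr (Or.inl ⟨na, nb, hpa, hpb, ?_⟩)))
      exact Or.inr (Or.inr (Or.inr (Or.inl ⟨tr u₁, mb, hnb,
        empty_complete S Sg tr htr hemp⟩)))
    · -- arrow / empty withRec
      have ha := htr a; simp only [hda] at ha
      have hb := htr b; simp only [hdb] at hb
      obtain ⟨na, ma, hpa, hna, hma⟩ := ha
      obtain ⟨nb, Mb, hpb, hnb, hMb⟩ := hb
      refine Or.inr (Or.inr (Or.inr (Or.inl ⟨na, nb, hpa, hpb, ?_⟩)))
      refine Or.inr (Or.inr (Or.inr (Or.inr ?_)))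
      simpa using hnb
  · -- N closed under unfolding
    rintro x y (⟨t₁, u₁, m₁, m₂, hx, hy, hr, hnb⟩ | hnb | ⟨L, K, hx, hy, hall⟩ | hfull)
    · exact Or.inl ⟨tr t₁, m₁, tr u₁, m₂, hx, hy, ⟨u₁, t₁, hr, rfl, rfl⟩,
        Or.inr (Or.inl hnb)⟩
    · obtain ⟨a', b', hr, hx, hy⟩ := hnb
      exact Or.inr (Or.inl ⟨tr a', tr b', hx, hy, ⟨a', b', hr, rfl, rfl⟩⟩)
    · refine Or.inr (Or.inr (Or.inl ⟨L, K, hx, hy, ?_⟩))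
      rintro p hp
      obtain ⟨rj, hrj, sj, hsj, hnb⟩ := hall p hp
      exact ⟨rj, hrj, sj, hsj, Or.inr (Or.inl hnb)⟩
    · exact Or.inr (Or.inr (Or.inr (Or.inr hfull)))

end CBPV
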